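/- For probability distributions P, Q on a finite alphabet X with full support and any α > 0, the variational characterization D_{α/(1+α)}(P‖Q) = min over probability distributions V on X of (α D(V‖P) + D(V‖Q)) holds. -/

import Mathlib

open scoped BigOperators

/-- Kullback–Leibler divergence between pmfs on a finite alphabet
(convention `0 log 0 = 0`). -/
noncomputable def klDiv {X : Type*} [Fintype X] (P Q : X → ℝ) : ℝ :=
  ∑ x, P x * Real.log (P x / Q x)

/-- Rényi divergence of order `lam ∈ (0,1)` between pmfs on a finite alphabet. -/
noncomputable def renyiDiv {X : Type*} [Fintype X] (lam : ℝ) (P Q : X → ℝ) : ℝ :=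
  (1 / (lam - 1)) * Real.log (∑ x, P x ^ lam * Q x ^ (1 - lam))

theorem stmt4 {X : Type*} [Fintype X] [Nonempty X]
    (P Q : X → ℝ) (hP0 : ∀ x, 0 < P x) (hP1 : ∑ x, P x = 1)
    (hQ0 : ∀ x, 0 < Q x) (hQ1 : ∑ x, Q x = 1)
    (α : ℝ) (hα : 0 < α) :
    IsLeast {r : ℝ | ∃ V : X → ℝ, (∀ x, 0 ≤ V x) ∧ (∑ x, V x = 1) ∧
        r = α * klDiv V P + klDiv V Q}
      (renyiDiv (α / (1 + α)) P Q) := by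
  have hα1 : (0:ℝ) < 1 + α := by linarith
  set lam : ℝ := α / (1 + α) with hlam
  set Z : ℝ := ∑ x, P x ^ lam * Q x ^ (1 - lam) with hZ
  have hZpos : 0 < Z := Finset.sum_pos (fun x _ => mul_pos
    (Real.rpow_pos_of_pos (hP0 x) _) (Real.rpow_pos_of_pos (hQ0 x) _))
    Finset.univ_nonempty
  set W : X → ℝ := fun x => P x ^ lam * Q x ^ (1 - lam) / Z with hW
  have hW0 : ∀ x, 0 < W x := fun x => div_pos (mul_pos
    (Real.rpow_pos_of_pos (hP0 x) _) (Real.rpow_pos_of_pos (hQ0 x) _)) hZpos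
  have hW1 : ∑ x, W x = 1 := by
    rw [hW]
    simp only
    rw [← Finset.sum_div, ← hZ, div_self hZpos.ne']
  have hren : renyiDiv lam P Q = -(1+α) * Real.log Z := by
    rw [renyiDiv, ← hZ]
    have h : lam - 1 = -(1/(1+α)) := by
      rw [hlam]; field_simp; ring
    rw [h]
    field_simp
  have hlogW : ∀ x, Real.log (W x) =
      lam * Real.log (P x) + (1 - lam) * Real.log (Q x) - Real.log Z := by
    intro x
    rw [hW]
    simp only
    rw [Real.log_div (mul_pos (Real.rpow_pos_of_pos (hP0 x) _)
        (Real.rpow_pos_of_pos (hQ0 x) _)).ne' hZpos.ne',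
      Real.log_mul (Real.rpow_pos_of_pos (hP0 x) _).ne'
        (Real.rpow_pos_of_pos (hQ0 x) _).ne',
      Real.log_rpow (hP0 x), Real.log_rpow (hQ0 x)]
  have key : ∀ V : X → ℝ, (∀ x, 0 ≤ V x) → (∑ x, V x = 1) →
      α * klDiv V P + klDiv V Q
        = (1+α) * (∑ x, V x * Real.log (V x / W x)) + renyiDiv lam P Q := by
    intro V hV0 hV1
    rw [hren, klDiv, klDiv, Finset.mul_sum, Finset.mul_sum, ← Finset.sum_add_distrib]
    have hpt : ∀ x ∈ Finset.univ,
        α * (V x * Real.log (V x / P x)) + V x * Real.log (V x / Q x)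
          = (1+α) * (V x * Real.log (V x / W x)) - (1+α) * Real.log Z * V x := by
      intro x _
      by_cases hx : V x = 0
      · simp [hx]
      · have hVx : 0 < V x := lt_of_le_of_ne (hV0 x) (Ne.symm hx)
        rw [Real.log_div hx (hP0 x).ne', Real.log_div hx (hQ0 x).ne',
          Real.log_div hx (hW0 x).ne', hlogW x, hlam]
        field_simp
        ring
    rw [Finset.sum_congr rfl hpt, Finset.sum_sub_distrib, ← Finset.mul_sum,
      ← Finset.mul_sum, hV1, mul_one]
    ring
  constructor
  · refine ⟨W, fun x => (hW0 x).le, hW1, ?_⟩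
    rw [key W (fun x => (hW0 x).le) hW1]
    have : ∑ x, W x * Real.log (W x / W x) = 0 := by
      apply Finset.sum_eq_zero
      intro x _
      rw [div_self (hW0 x).ne', Real.log_one, mul_zero]
    rw [this, mul_zero, zero_add]
  · rintro r ⟨V, hV0, hV1, rfl⟩
    rw [key V hV0 hV1]
    have hS : 0 ≤ ∑ x, V x * Real.log (V x / W x) := by
      have h1 : ∑ x, (V x - W x) ≤ ∑ x, V x * Real.log (V x / W x) := by
        apply Finset.sum_le_sum
        intro x _
        by_cases hx : V x = 0
        · simp [hx, (hW0 x).le]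
        · have hVx : 0 < V x := lt_of_le_of_ne (hV0 x) (Ne.symm hx)
          have h2 : Real.log (W x / V x) ≤ W x / V x - 1 :=
            Real.log_le_sub_one_of_pos (div_pos (hW0 x) hVx)
          have h3 : Real.log (V x / W x) = -Real.log (W x / V x) := by
            rw [Real.log_div hx (hW0 x).ne', Real.log_div (hW0 x).ne' hx]
            ring
          rw [h3]
          have h4 : W x / V x - 1 = (W x - V x) / V x := by field_simp
          rw [h4] at h2
          have h5 : -((W x - V x) / V x) ≤ -Real.log (W x / V x) := by linarith
          calc V x - W x = V x * (-((W x - V x) / V x)) := by field_simp; ring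
            _ ≤ V x * (-Real.log (W x / V x)) := by
                exact mul_le_mul_of_nonneg_left h5 hVx.le
      rw [Finset.sum_sub_distrib, hV1, hW1, sub_self] at h1
      exact h1
    nlinarith [hS]
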